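/- Let G be a cubic graph with M1, M2 disjoint matchings such that |M1 ∪ M2| is maximum and, subject to this, the associated conflict graph H has the minimum number of edges. If a component of G − M1 − M2 is a path u1u2u3u4 (P4), then no edge of M1 ∪ M2 joins an endpoint of this P4 to the middle vertex of a P3 component of G − M1 − M2. -/

import Mathlib

open SimpleGraph

/-- A matching in `G` given as a set of edges: edges of `G`, pairwise vertex-disjoint. -/
def IsMatchingSet {V : Type*} (G : SimpleGraph V) (M : Set (Sym2 V)) : Prop :=
  M ⊆ G.edgeSet ∧ ∀ e ∈ M, ∀ f ∈ M, e ≠ f → ∀ v, v ∈ e → v ∉ f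

/-- `M1, M2` are disjoint matchings of `G` with `|M1 ∪ M2|` maximum over all pairs of
disjoint matchings of `G`. -/
def MaxDisjointPair {V : Type*} (G : SimpleGraph V) (M1 M2 : Set (Sym2 V)) : Prop :=
  IsMatchingSet G M1 ∧ IsMatchingSet G M2 ∧ Disjoint M1 M2 ∧
  ∀ N1 N2 : Set (Sym2 V), IsMatchingSet G N1 → IsMatchingSet G N2 → Disjoint N1 N2 →
    (N1 ∪ N2).ncard ≤ (M1 ∪ M2).ncard

/-- Adjacency in `Ĝ = G − M1 − M2`: adjacency via an edge of `G` not in `M1 ∪ M2`. -/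
def hatAdj {V : Type*} (G : SimpleGraph V) (M1 M2 : Set (Sym2 V)) (x y : V) : Prop :=
  G.Adj x y ∧ s(x, y) ∉ M1 ∪ M2

/-- The vertices `u1 u2 u3 u4` form a path (`P4`) connected component of
`Ĝ = G − M1 − M2`. -/
def IsP4Component {V : Type*} (G : SimpleGraph V) (M1 M2 : Set (Sym2 V))
    (u1 u2 u3 u4 : V) : Prop :=
  u1 ≠ u2 ∧ u1 ≠ u3 ∧ u1 ≠ u4 ∧ u2 ≠ u3 ∧ u2 ≠ u4 ∧ u3 ≠ u4 ∧
  hatAdj G M1 M2 u1 u2 ∧ hatAdj G M1 M2 u2 u3 ∧ hatAdj G M1 M2 u3 u4 ∧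
  (∀ w, hatAdj G M1 M2 u1 w → w = u2) ∧
  (∀ w, hatAdj G M1 M2 u2 w → w = u1 ∨ w = u3) ∧
  (∀ w, hatAdj G M1 M2 u3 w → w = u2 ∨ w = u4) ∧
  (∀ w, hatAdj G M1 M2 u4 w → w = u3)

/-- The vertices `v1, v, v2` form a `P3` connected component of `Ĝ = G − M1 − M2`,
with middle vertex `v`. -/
def IsP3Component {V : Type*} (G : SimpleGraph V) (M1 M2 : Set (Sym2 V))
    (v1 v v2 : V) : Prop :=
  v1 ≠ v2 ∧ v1 ≠ v ∧ v2 ≠ v ∧ hatAdj G M1 M2 v v1 ∧ hatAdj G M1 M2 v v2 ∧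
  (∀ w, hatAdj G M1 M2 v w → w = v1 ∨ w = v2) ∧
  (∀ w, hatAdj G M1 M2 v1 w → w = v) ∧ (∀ w, hatAdj G M1 M2 v2 w → w = v)

/-- The edge set of the conflict graph `H` associated with the pair of disjoint
matchings `(N1, N2)`: unordered pairs of distinct edges of `G − N1 − N2` whose
distance in the line graph of `G` is at most `2`. -/
def conflictEdges {V : Type*} (G : SimpleGraph V) (N1 N2 : Set (Sym2 V)) :
    Set (Sym2 (Sym2 V)) :=
  {q | ∃ e f : Sym2 V, q = s(e, f) ∧ e ≠ f ∧ e ∈ G.edgeSet \ (N1 ∪ N2) ∧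
    f ∈ G.edgeSet \ (N1 ∪ N2) ∧ ∃ x y : V, x ∈ e ∧ y ∈ f ∧ (x = y ∨ G.Adj x y)}

section Helpers

variable {V : Type*}

lemma IsMatchingSet.adj {G : SimpleGraph V} {M : Set (Sym2 V)} (hM : IsMatchingSet G M)
    {x y : V} (h : s(x, y) ∈ M) : G.Adj x y := G.mem_edgeSet.mp (hM.1 h)

lemma IsMatchingSet.unique {G : SimpleGraph V} {M : Set (Sym2 V)} (hM : IsMatchingSet G M)
    {x y y' : V} (h1 : s(x, y) ∈ M) (h2 : s(x, y') ∈ M) : y = y' := by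
  by_cases heq : s(x, y) = s(x, y')
  · rcases Sym2.eq_iff.mp heq with ⟨_, h⟩ | ⟨h1', h2'⟩
    · exact h
    · rw [h2', ← h1']
  · exact absurd (Sym2.mem_mk_left x y') (hM.2 _ h1 _ h2 heq x (Sym2.mem_mk_left x y))

lemma IsMatchingSet.subset' {G : SimpleGraph V} {M N : Set (Sym2 V)} (hM : IsMatchingSet G M)
    (h : N ⊆ M) : IsMatchingSet G N :=
  ⟨fun q hq => hM.1 (h hq), fun e he f hf => hM.2 e (h he) f (h hf)⟩

lemma IsMatchingSet.insert' {G : SimpleGraph V} {M : Set (Sym2 V)} (hM : IsMatchingSet G M)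
    {x y : V} (hadj : G.Adj x y) (hx : ∀ q ∈ M, x ∉ q) (hy : ∀ q ∈ M, y ∉ q) :
    IsMatchingSet G (insert s(x, y) M) := by
  constructor
  · rintro q (rfl | hq)
    · exact G.mem_edgeSet.mpr hadj
    · exact hM.1 hq
  · rintro q (rfl | hq) q' (rfl | hq') hne z hz
    · exact absurd rfl hne
    · intro hz'
      rcases Sym2.mem_iff.mp hz with rfl | rfl
      · exact hx q' hq' hz'
      · exact hy q' hq' hz'
    · intro hz'
      rcases Sym2.mem_iff.mp hz' with rfl | rfl
      · exact hx q hq hz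
      · exact hy q hq hz
    · exact hM.2 q hq q' hq' hne z hz

lemma edge_rep {G : SimpleGraph V} {q : Sym2 V} (hq : q ∈ G.edgeSet) {x : V} (hx : x ∈ q) :
    ∃ y, q = s(x, y) ∧ G.Adj x y := by
  obtain ⟨y, rfl⟩ := Sym2.mem_iff_exists.mp hx
  exact ⟨y, rfl, G.mem_edgeSet.mp hq⟩

lemma three_nbrs {G : SimpleGraph V} [Fintype V] [DecidableRel G.Adj] {x : V}
    (hdeg : G.degree x = 3) {a b c : V} (hab : a ≠ b) (hac : a ≠ c) (hbc : b ≠ c)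
    (ha : G.Adj x a) (hb : G.Adj x b) (hc : G.Adj x c) :
    ∀ y, G.Adj x y → y = a ∨ y = b ∨ y = c := by
  classical
  have hsub : ({a, b, c} : Finset V) ⊆ G.neighborFinset x := by
    intro y hy
    simp only [Finset.mem_insert, Finset.mem_singleton] at hy
    rcases hy with rfl | rfl | rfl <;> simp [SimpleGraph.mem_neighborFinset, ha, hb, hc]
  have hcard : ({a, b, c} : Finset V).card = 3 :=
    Finset.card_eq_three.mpr ⟨a, b, c, hab, hac, hbc, rfl⟩
  have heq := Finset.eq_of_subset_of_card_le hsub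
    (by rw [G.card_neighborFinset_eq_degree, hdeg, hcard])
  intro y hy
  have hmem : y ∈ G.neighborFinset x := (G.mem_neighborFinset x y).mpr hy
  rw [← heq] at hmem
  simpa using hmem

lemma third_nbr {G : SimpleGraph V} [Fintype V] [DecidableRel G.Adj] {x : V}
    (hdeg : G.degree x = 3) {a b : V} (ha : G.Adj x a) (hb : G.Adj x b) :
    ∃ c, G.Adj x c ∧ c ≠ a ∧ c ≠ b := by
  classical
  by_contra hcon
  push_neg at hcon
  have hsub : G.neighborFinset x ⊆ {a, b} := by
    intro y hy
    rw [SimpleGraph.mem_neighborFinset] at hy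
    by_cases h1 : y = a
    · simp [h1]
    · simp [hcon y hy h1]
  have h2 : G.degree x ≤ 2 := by
    calc G.degree x = (G.neighborFinset x).card := (G.card_neighborFinset_eq_degree x).symm
    _ ≤ ({a, b} : Finset V).card := Finset.card_le_card hsub
    _ ≤ 2 := le_trans (Finset.card_insert_le _ _) (by simp)
  omega

end Helpers

section Transfer

variable {V : Type*}

lemma conflictEdges_congr (G : SimpleGraph V) {N1 N2 M1 M2 : Set (Sym2 V)}
    (h : N1 ∪ N2 = M1 ∪ M2) : conflictEdges G N1 N2 = conflictEdges G M1 M2 := by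
  unfold conflictEdges; rw [h]

lemma IsP4_congr {G : SimpleGraph V} {N1 N2 M1 M2 : Set (Sym2 V)} {a b c d : V}
    (h : N1 ∪ N2 = M1 ∪ M2) (hp : IsP4Component G M1 M2 a b c d) :
    IsP4Component G N1 N2 a b c d := by
  unfold IsP4Component hatAdj at *; rw [h]; exact hp

lemma IsP3_congr {G : SimpleGraph V} {N1 N2 M1 M2 : Set (Sym2 V)} {a b c : V}
    (h : N1 ∪ N2 = M1 ∪ M2) (hp : IsP3Component G M1 M2 a b c) :
    IsP3Component G N1 N2 a b c := by
  unfold IsP3Component hatAdj at *; rw [h]; exact hp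

lemma P4_rev {G : SimpleGraph V} {M1 M2 : Set (Sym2 V)} {u1 u2 u3 u4 : V}
    (h : IsP4Component G M1 M2 u1 u2 u3 u4) : IsP4Component G M1 M2 u4 u3 u2 u1 := by
  obtain ⟨d12, d13, d14, d23, d24, d34, a12, a23, a34, c1, c2, c3, c4⟩ := h
  have hsym : ∀ {x y : V}, hatAdj G M1 M2 x y → hatAdj G M1 M2 y x := by
    intro x y hxy
    obtain ⟨ha, hb⟩ := hxy
    exact ⟨ha.symm, by rw [Sym2.eq_swap]; exact hb⟩
  exact ⟨d34.symm, d24.symm, d14.symm, d23.symm, d13.symm, d12.symm,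
    hsym a34, hsym a23, hsym a12, c4,
    fun w hw => (c3 w hw).symm, fun w hw => (c2 w hw).symm, c1⟩

/-- The graph whose edges are a given set of pairs (used for `M1 ∪ M2`). -/
def unionG (M : Set (Sym2 V)) : SimpleGraph V where
  Adj x y := x ≠ y ∧ s(x, y) ∈ M
  symm := by
    refine ⟨fun x y hxy => ?_⟩
    exact ⟨hxy.1.symm, by rw [Sym2.eq_swap]; exact hxy.2⟩
  loopless := by refine ⟨fun x hx => ?_⟩; exact hx.1 rfl

lemma unionG_adj {M : Set (Sym2 V)} {x y : V} :
    (unionG M).Adj x y ↔ x ≠ y ∧ s(x, y) ∈ M := Iff.rfl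

/-- The set of edges having an endpoint in `S`. -/
def flipK (S : Set V) : Set (Sym2 V) := {q | ∃ x ∈ q, x ∈ S}

lemma flip_pair {G : SimpleGraph V} {M1 M2 : Set (Sym2 V)} (h1 : IsMatchingSet G M1)
    (h2 : IsMatchingSet G M2) (hd : Disjoint M1 M2) (S : Set V)
    (hS : ∀ x y : V, x ∈ S → s(x, y) ∈ M1 ∪ M2 → y ∈ S) :
    IsMatchingSet G (M1 \ flipK S ∪ M2 ∩ flipK S) ∧
    IsMatchingSet G (M2 \ flipK S ∪ M1 ∩ flipK S) ∧
    Disjoint (M1 \ flipK S ∪ M2 ∩ flipK S) (M2 \ flipK S ∪ M1 ∩ flipK S) ∧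
    (M1 \ flipK S ∪ M2 ∩ flipK S) ∪ (M2 \ flipK S ∪ M1 ∩ flipK S) = M1 ∪ M2 := by
  have hclosed : ∀ q ∈ M1 ∪ M2, q ∈ flipK S → ∀ y ∈ q, y ∈ S := by
    rintro q hq ⟨x, hxq, hxS⟩ y hyq
    obtain ⟨x', rfl⟩ := Sym2.mem_iff_exists.mp hxq
    rcases Sym2.mem_iff.mp hyq with h | h
    · rw [h]; exact hxS
    · rw [h]; exact hS x x' hxS hq
  have hmix : ∀ i : Bool, ∀ qa qb : Sym2 V,
      qa ∈ (cond i M1 M2) \ flipK S → qb ∈ (cond (!i) M1 M2) ∩ flipK S →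
      ∀ x, x ∈ qa → x ∈ qb → False := by
    rintro i qa qb ⟨ha1, ha2⟩ ⟨hb1, hb2⟩ x hxa hxb
    have hbU : qb ∈ M1 ∪ M2 := by cases i <;> [exact Or.inl hb1; exact Or.inr hb1]
    exact ha2 ⟨x, hxa, hclosed qb hbU hb2 x hxb⟩
  refine ⟨?_, ?_, ?_, ?_⟩
  · constructor
    · rintro q (⟨hq, _⟩ | ⟨hq, _⟩)
      · exact h1.1 hq
      · exact h2.1 hq
    · rintro q (hq | hq) q' (hq' | hq') hne x hx hx'
      · exact h1.2 _ hq.1 _ hq'.1 hne x hx hx'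
      · exact hmix true q q' hq hq' x hx hx'
      · exact hmix true q' q hq' hq x hx' hx
      · exact h2.2 _ hq.1 _ hq'.1 hne x hx hx'
  · constructor
    · rintro q (⟨hq, _⟩ | ⟨hq, _⟩)
      · exact h2.1 hq
      · exact h1.1 hq
    · rintro q (hq | hq) q' (hq' | hq') hne x hx hx'
      · exact h2.2 _ hq.1 _ hq'.1 hne x hx hx'
      · exact hmix false q q' hq hq' x hx hx'
      · exact hmix false q' q hq' hq x hx' hx
      · exact h1.2 _ hq.1 _ hq'.1 hne x hx hx'
  · rw [Set.disjoint_left]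
    rintro q (hq | hq) (hq' | hq')
    · exact Set.disjoint_left.mp hd hq.1 hq'.1
    · exact hq.2 hq'.2
    · exact hq'.2 hq.2
    · exact Set.disjoint_left.mp hd hq'.1 hq.1
  · ext q
    constructor
    · rintro ((⟨h, _⟩ | ⟨h, _⟩) | (⟨h, _⟩ | ⟨h, _⟩))
      · exact Or.inl h
      · exact Or.inr h
      · exact Or.inr h
      · exact Or.inl h
    · rintro (h | h)
      · by_cases hk : q ∈ flipK S
        · exact Or.inr (Or.inr ⟨h, hk⟩)
        · exact Or.inl (Or.inl ⟨h, hk⟩)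
      · by_cases hk : q ∈ flipK S
        · exact Or.inl (Or.inr ⟨h, hk⟩)
        · exact Or.inr (Or.inl ⟨h, hk⟩)

end Transfer

section AltSeq

variable {V : Type*}

open Classical

/-- One step of the alternating walk: from `(x, b)` follow the edge at `x` in the matching
selected by `b` (`true ↦ M1`), if any. -/
noncomputable def altStep (M1 M2 : Set (Sym2 V)) : V × Bool → Option (V × Bool) :=
  fun p => if h : ∃ y, s(p.1, y) ∈ (cond p.2 M1 M2) then some (h.choose, !p.2) else none

/-- The alternating walk starting at `a`, first following `M1`. -/
noncomputable def altSeq (M1 M2 : Set (Sym2 V)) (a : V) : ℕ → Option (V × Bool)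
  | 0 => some (a, true)
  | n + 1 => (altSeq M1 M2 a n).bind (altStep M1 M2)

lemma altStep_some {M1 M2 : Set (Sym2 V)} {p : V × Bool} {x : V} {cb : Bool}
    (h : altStep M1 M2 p = some (x, cb)) :
    s(p.1, x) ∈ cond p.2 M1 M2 ∧ cb = !p.2 := by
  unfold altStep at h
  by_cases hex : ∃ y, s(p.1, y) ∈ cond p.2 M1 M2
  · rw [dif_pos hex] at h
    simp only [Option.some.injEq, Prod.mk.injEq] at h
    obtain ⟨h1, h2⟩ := h
    exact ⟨h1 ▸ hex.choose_spec, h2.symm⟩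
  · rw [dif_neg hex] at h; cases h

lemma altStep_eq {G : SimpleGraph V} {M1 M2 : Set (Sym2 V)}
    (h1 : IsMatchingSet G M1) (h2 : IsMatchingSet G M2)
    {x y : V} {cb : Bool} (hy : s(x, y) ∈ cond cb M1 M2) :
    altStep M1 M2 (x, cb) = some (y, !cb) := by
  have hex : ∃ y', s(x, y') ∈ cond cb M1 M2 := ⟨y, hy⟩
  unfold altStep
  rw [dif_pos hex]
  have hch : hex.choose = y := by
    cases cb
    · exact h2.unique hex.choose_spec hy
    · exact h1.unique hex.choose_spec hy
  rw [hch]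

lemma no_three_ends {G : SimpleGraph V} {M1 M2 : Set (Sym2 V)}
    (h1 : IsMatchingSet G M1) (h2 : IsMatchingSet G M2) (hd : Disjoint M1 M2)
    {a b c : V} (hab : a ≠ b) (hac : a ≠ c) (hbc : b ≠ c)
    (haM2 : ∀ y, s(a, y) ∉ M2) (hbM2 : ∀ y, s(b, y) ∉ M2) (hcM1 : ∀ y, s(c, y) ∉ M1)
    (hrb : (unionG (M1 ∪ M2)).Reachable a b) (hrc : (unionG (M1 ∪ M2)).Reachable a c) :
    False := by
  classical
  set seq := altSeq M1 M2 a with hseq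
  have seq0 : seq 0 = some (a, true) := rfl
  have seq_succ : ∀ n, seq (n + 1) = (seq n).bind (altStep M1 M2) := fun n => rfl
  -- closure of the visited set under union-graph adjacency
  have key : ∀ n x (cb : Bool) y, seq n = some (x, cb) → s(x, y) ∈ M1 ∪ M2 →
      ∃ m c', seq m = some (y, c') := by
    intro n x cb y hn hyU
    by_cases hcol : s(x, y) ∈ cond cb M1 M2
    · refine ⟨n + 1, !cb, ?_⟩
      rw [seq_succ, hn]
      exact altStep_eq h1 h2 hcol
    · have hoth : s(x, y) ∈ cond (!cb) M1 M2 := by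
        cases cb
        · simp only [Bool.not_false, cond] at hcol ⊢
          rcases hyU with h | h
          · exact h
          · exact absurd h hcol
        · simp only [Bool.not_true, cond] at hcol ⊢
          rcases hyU with h | h
          · exact absurd h hcol
          · exact h
      cases n with
      | zero =>
        have h0 : (some (a, true) : Option (V × Bool)) = some (x, cb) := seq0.symm.trans hn
        simp only [Option.some.injEq, Prod.mk.injEq] at h0
        obtain ⟨hxa, hcb⟩ := h0
        rw [← hcb] at hoth
        rw [← hxa] at hoth
        simp only [Bool.not_true, cond] at hoth
        exact absurd hoth (haM2 y)
      | succ m =>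
        rw [seq_succ] at hn
        obtain ⟨⟨x', c'⟩, hm, hstep⟩ := Option.bind_eq_some_iff.mp hn
        obtain ⟨harr, hcb⟩ := altStep_some hstep
        -- harr : s(x', x) ∈ cond c' M1 M2, hcb : cb = !c'
        have hc' : c' = !cb := by rw [hcb]; simp
        rw [hc'] at harr
        have harr' : s(x, x') ∈ cond (!cb) M1 M2 := by rwa [Sym2.eq_swap] at harr
        have hyx' : y = x' := by
          cases cb
          · exact h1.unique hoth harr'
          · exact h2.unique hoth harr'
        exact ⟨m, !cb, by rw [hyx', ← hc']; exact hm⟩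
  have reachO : ∀ x z, (unionG (M1 ∪ M2)).Walk x z →
      (∃ n cb, seq n = some (x, cb)) → ∃ m c', seq m = some (z, c') := by
    intro x z w
    induction w with
    | nil => exact id
    | cons hadj p ih =>
      rintro ⟨n, cb, hn⟩
      exact ih (key n _ cb _ hn hadj.2)
  -- termination at a missing-color endpoint
  have term : ∀ (β : Bool) (u : V), u ≠ a → (∀ y, s(u, y) ∉ cond β M1 M2) →
      ∀ n cb, seq n = some (u, cb) → seq (n + 1) = none := by
    intro β u hua hnoedge n cb hn
    cases n with
    | zero =>
      have h0 : (some (a, true) : Option (V × Bool)) = some (u, cb) := seq0.symm.trans hn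
      simp only [Option.some.injEq, Prod.mk.injEq] at h0
      exact absurd h0.1.symm hua
    | succ m =>
      have hn' := hn
      rw [seq_succ] at hn'
      obtain ⟨⟨x', c'⟩, hm, hstep⟩ := Option.bind_eq_some_iff.mp hn'
      obtain ⟨harr, hcb⟩ := altStep_some hstep
      have harr' : s(u, x') ∈ cond c' M1 M2 := by rwa [Sym2.eq_swap] at harr
      have hc' : c' ≠ β := fun h => hnoedge x' (h ▸ harr')
      have hcbβ : cb = β := by
        rw [hcb]
        cases c' <;> cases β <;> simp_all
      rw [seq_succ, hn]
      show altStep M1 M2 (u, cb) = none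
      unfold altStep
      rw [dif_neg]
      rw [hcbβ]
      push_neg
      intro y
      exact hnoedge y
  have mono : ∀ n m, n ≤ m → seq n = none → seq m = none := by
    intro n m hle hn
    induction hle with
    | refl => exact hn
    | step _ ih => rw [seq_succ, ih]; rfl
  obtain ⟨wb⟩ := hrb
  obtain ⟨wc⟩ := hrc
  obtain ⟨m, cbb, hmb⟩ := reachO a b wb ⟨0, true, seq0⟩
  obtain ⟨k, cbc, hkc⟩ := reachO a c wc ⟨0, true, seq0⟩
  have hb1 : seq (m + 1) = none :=
    term false b (Ne.symm hab) (fun y => hbM2 y) m cbb hmb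
  have hc1 : seq (k + 1) = none :=
    term true c (Ne.symm hac) (fun y => hcM1 y) k cbc hkc
  rcases lt_trichotomy m k with h | h | h
  · have := mono (m + 1) k h hb1
    rw [this] at hkc; cases hkc
  · rw [← h] at hkc
    rw [hmb] at hkc
    simp only [Option.some.injEq, Prod.mk.injEq] at hkc
    exact hbc hkc.1
  · have := mono (k + 1) m h hc1
    rw [this] at hmb; cases hmb
end AltSeq

section CaseA

lemma caseA {V : Type*} [Fintype V] (G : SimpleGraph V) [DecidableRel G.Adj]
    (hcubic : ∀ v : V, G.degree v = 3) (M1 M2 : Set (Sym2 V))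
    (hmax : MaxDisjointPair G M1 M2)
    (hmin : ∀ N1 N2 : Set (Sym2 V), IsMatchingSet G N1 → IsMatchingSet G N2 →
      Disjoint N1 N2 → (N1 ∪ N2).ncard = (M1 ∪ M2).ncard →
      (conflictEdges G M1 M2).ncard ≤ (conflictEdges G N1 N2).ncard)
    (u1 u2 u3 u4 : V) (hP4 : IsP4Component G M1 M2 u1 u2 u3 u4)
    (v1 v v2 : V) (hP3 : IsP3Component G M1 M2 v1 v v2)
    (he : s(u1, v) ∈ M1) (hu2f : ∀ q ∈ M1, u2 ∉ q) : False := by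
  classical
  obtain ⟨hM1, hM2, hdisj, hmaxcard⟩ := hmax
  obtain ⟨d12, d13, d14, d23, d24, d34, a12, a23, a34, c1, c2, c3, c4⟩ := hP4
  obtain ⟨dv12, dv1, dv2, av1, av2, cv, cv1, cv2⟩ := hP3
  have hsym : ∀ {x y : V}, hatAdj G M1 M2 x y → hatAdj G M1 M2 y x := by
    intro x y hxy
    obtain ⟨hxy1, hxy2⟩ := hxy
    exact ⟨hxy1.symm, by rw [Sym2.eq_swap]; exact hxy2⟩
  have hUsub : M1 ∪ M2 ⊆ G.edgeSet := Set.union_subset hM1.1 hM2.1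
  have heU : s(u1, v) ∈ M1 ∪ M2 := Or.inl he
  have heG : G.Adj u1 v := hM1.adj he
  have he2 : s(u1, v) ∉ M2 := fun h => Set.disjoint_left.mp hdisj he h
  -- distinctness pack
  have hvu1 : v ≠ u1 := heG.ne'
  have hvu2 : v ≠ u2 := by
    intro h
    rw [← h] at a12
    exact a12.2 heU
  have hvu3 : v ≠ u3 := by
    intro h
    have h23 : hatAdj G M1 M2 v u2 := by rw [h]; exact hsym a23
    rcases cv u2 h23 with h' | h'
    · have h1 := cv1 u1 (by rw [← h']; exact hsym a12)
      rw [h] at h1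
      exact d13 h1
    · have h1 := cv2 u1 (by rw [← h']; exact hsym a12)
      rw [h] at h1
      exact d13 h1
  have hvu4 : v ≠ u4 := by
    intro h
    have h34 : hatAdj G M1 M2 v u3 := by rw [h]; exact hsym a34
    rcases cv u3 h34 with h' | h'
    · have h1 := cv1 u2 (by rw [← h']; exact hsym a23)
      rw [h] at h1
      exact d24 h1
    · have h1 := cv2 u2 (by rw [← h']; exact hsym a23)
      rw [h] at h1
      exact d24 h1
  have hu3v1 : u3 ≠ v1 := by
    intro h
    have h1 := cv1 u2 (by rw [← h]; exact hsym a23)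
    exact hvu2 h1.symm
  have hu3v2 : u3 ≠ v2 := by
    intro h
    have h1 := cv2 u2 (by rw [← h]; exact hsym a23)
    exact hvu2 h1.symm
  have hu4v1 : u4 ≠ v1 := by
    intro h
    have h1 := cv1 u3 (by rw [← h]; exact hsym a34)
    exact hvu3 h1.symm
  have hu4v2 : u4 ≠ v2 := by
    intro h
    have h1 := cv2 u3 (by rw [← h]; exact hsym a34)
    exact hvu3 h1.symm
  have hu1v1 : u1 ≠ v1 := by
    intro h
    rw [h] at heU
    rw [Sym2.eq_swap] at heU
    exact av1.2 heU
  have hu1v2 : u1 ≠ v2 := by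
    intro h
    rw [h] at heU
    rw [Sym2.eq_swap] at heU
    exact av2.2 heU
  -- neighbors of v
  have hvnbr : ∀ y, G.Adj v y → y = u1 ∨ y = v1 ∨ y = v2 :=
    three_nbrs (hcubic v) hu1v1 hu1v2 dv12 heG.symm av1.1 av2.1
  -- third neighbor of u1
  obtain ⟨z, hz_adj, hz_ne2, hz_nev⟩ := third_nbr (hcubic u1) a12.1 heG
  have hu1nbr : ∀ y, G.Adj u1 y → y = u2 ∨ y = v ∨ y = z :=
    three_nbrs (hcubic u1) hvu2.symm hz_ne2.symm hz_nev.symm a12.1 heG hz_adj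
  have hf : s(u1, z) ∈ M1 ∪ M2 := by
    by_contra hfree
    exact hz_ne2 (c1 z ⟨hz_adj, hfree⟩)
  have hfM2 : s(u1, z) ∈ M2 := by
    rcases hf with h | h
    · exact absurd (hM1.unique h he) hz_nev
    · exact h
  -- u2's matched edge
  obtain ⟨w, hw_adj, hw_ne1, hw_ne3⟩ := third_nbr (hcubic u2) a12.1.symm a23.1
  have hu2nbr : ∀ y, G.Adj u2 y → y = u1 ∨ y = u3 ∨ y = w :=
    three_nbrs (hcubic u2) d13 hw_ne1.symm hw_ne3.symm a12.1.symm a23.1 hw_adj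
  have hg : s(u2, w) ∈ M1 ∪ M2 := by
    by_contra hfree
    rcases c2 w ⟨hw_adj, hfree⟩ with h | h
    · exact hw_ne1 h
    · exact hw_ne3 h
  have hu2uniq : ∀ q ∈ M1 ∪ M2, u2 ∈ q → q = s(u2, w) := by
    intro q hq hmem
    obtain ⟨y, rfl, hadj⟩ := edge_rep (hUsub hq) hmem
    rcases hu2nbr y hadj with rfl | rfl | rfl
    · rw [Sym2.eq_swap] at hq
      exact absurd hq a12.2
    · exact absurd hq a23.2
    · rfl
  have hgM2 : s(u2, w) ∈ M2 := by
    rcases hg with h | h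
    · exact absurd (Sym2.mem_mk_left u2 w) (hu2f _ h)
    · exact h
  -- u3's matched edge
  obtain ⟨w3, hw3_adj, hw3_ne2, hw3_ne4⟩ := third_nbr (hcubic u3) a23.1.symm a34.1
  have hu3nbr : ∀ y, G.Adj u3 y → y = u2 ∨ y = u4 ∨ y = w3 :=
    three_nbrs (hcubic u3) d24 hw3_ne2.symm hw3_ne4.symm a23.1.symm a34.1 hw3_adj
  have hh : s(u3, w3) ∈ M1 ∪ M2 := by
    by_contra hfree
    rcases c3 w3 ⟨hw3_adj, hfree⟩ with h | h
    · exact hw3_ne2 h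
    · exact hw3_ne4 h
  have hu3uniq : ∀ q ∈ M1 ∪ M2, u3 ∈ q → q = s(u3, w3) := by
    intro q hq hmem
    obtain ⟨y, rfl, hadj⟩ := edge_rep (hUsub hq) hmem
    rcases hu3nbr y hadj with rfl | rfl | rfl
    · rw [Sym2.eq_swap] at hq
      exact absurd hq a23.2
    · exact absurd hq a34.2
    · rfl
  -- the edge at u3 must belong to M1, else we could augment with s(u2, u3)
  have hhM1 : s(u3, w3) ∈ M1 := by
    by_contra hh2
    have hhM2 : s(u3, w3) ∈ M2 := hh.resolve_left hh2
    have hu3fM1 : ∀ q ∈ M1, u3 ∉ q := by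
      intro q hq hmem
      have hq' := hu3uniq q (Or.inl hq) hmem
      exact Set.disjoint_left.mp hdisj hq (hq' ▸ hhM2)
    have hN1 : IsMatchingSet G (insert s(u2, u3) M1) := hM1.insert' a23.1 hu2f hu3fM1
    have hdisj' : Disjoint (insert s(u2, u3) M1) M2 := by
      rw [Set.disjoint_left]
      rintro q (rfl | hq)
      · exact fun hq2 => a23.2 (Or.inr hq2)
      · exact Set.disjoint_left.mp hdisj hq
    have hcard := hmaxcard _ _ hN1 hM2 hdisj'
    rw [Set.insert_union] at hcard
    rw [Set.ncard_insert_of_notMem a23.2 (Set.toFinite _)] at hcard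
    omega
  have hhM2' : s(u3, w3) ∉ M2 := fun h => Set.disjoint_left.mp hdisj hhM1 h
  have hu3fM2 : ∀ q ∈ M2, u3 ∉ q := by
    intro q hq hmem
    exact hhM2' ((hu3uniq q (Or.inr hq) hmem) ▸ hq)
  have hvfM2 : ∀ q ∈ M2, v ∉ q := by
    intro q hq hmem
    obtain ⟨y, rfl, hadj⟩ := edge_rep (hM2.1 hq) hmem
    rcases hvnbr y hadj with rfl | rfl | rfl
    · rw [Sym2.eq_swap] at hq
      exact he2 hq
    · exact av1.2 (Or.inr hq)
    · exact av2.2 (Or.inr hq)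
  have hz3 : z ≠ u3 := by
    intro h
    rw [h] at hfM2
    exact hu3fM2 _ hfM2 (Sym2.mem_mk_right u1 u3)
  have hu1M2uniq : ∀ q ∈ M2, u1 ∈ q → q = s(u1, z) := by
    intro q hq hmem
    obtain ⟨y, rfl, hadj⟩ := edge_rep (hM2.1 hq) hmem
    rcases hu1nbr y hadj with rfl | rfl | rfl
    · exact absurd (Or.inr hq) a12.2
    · exact absurd hq he2
    · rfl
  by_cases hz4 : z = u4
  · -- augmentation: N1 = M1 - u1v + u1u2, N2 = M2 - u1u4 + u1v + u3u4 increases the union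
    rw [hz4] at hfM2 hu1M2uniq
    have hu1fM1' : ∀ q ∈ M1 \ {s(u1, v)}, u1 ∉ q := by
      rintro q ⟨hq, hne⟩ hmem
      obtain ⟨y, rfl, hadj⟩ := edge_rep (hM1.1 hq) hmem
      rcases hu1nbr y hadj with rfl | rfl | rfl
      · exact a12.2 (Or.inl hq)
      · exact hne rfl
      · rw [hz4] at hq
        exact Set.disjoint_left.mp hdisj hq hfM2
    have hP1 : IsMatchingSet G (insert s(u1, u2) (M1 \ {s(u1, v)})) :=
      (hM1.subset' Set.diff_subset).insert' a12.1 hu1fM1' (fun q hq => hu2f q hq.1)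
    have hu3f2 : ∀ q ∈ M2 \ {s(u1, u4)}, u3 ∉ q := fun q hq => hu3fM2 q hq.1
    have hu4f2 : ∀ q ∈ M2 \ {s(u1, u4)}, u4 ∉ q := by
      rintro q ⟨hq, hne⟩ hmem
      obtain ⟨y, rfl, hadj⟩ := edge_rep (hM2.1 hq) hmem
      have h41 : s(u4, u1) ∈ M2 := by rw [Sym2.eq_swap]; exact hfM2
      have := hM2.unique hq h41
      rw [this, Sym2.eq_swap] at hne
      exact hne rfl
    have hP2a : IsMatchingSet G (insert s(u3, u4) (M2 \ {s(u1, u4)})) :=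
      (hM2.subset' Set.diff_subset).insert' a34.1 hu3f2 hu4f2
    have hu1f2 : ∀ q ∈ insert s(u3, u4) (M2 \ {s(u1, u4)}), u1 ∉ q := by
      rintro q (rfl | ⟨hq, hne⟩) hmem
      · rcases Sym2.mem_iff.mp hmem with h | h
        · exact d13 h
        · exact d14 h
      · exact hne (hu1M2uniq q hq hmem)
    have hvf2 : ∀ q ∈ insert s(u3, u4) (M2 \ {s(u1, u4)}), v ∉ q := by
      rintro q (rfl | ⟨hq, _⟩) hmem
      · rcases Sym2.mem_iff.mp hmem with h | h
        · exact hvu3 h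
        · exact hvu4 h
      · exact hvfM2 q hq hmem
    have hP2 : IsMatchingSet G (insert s(u1, v) (insert s(u3, u4) (M2 \ {s(u1, u4)}))) :=
      hP2a.insert' heG hu1f2 hvf2
    have hdisjP : Disjoint (insert s(u1, u2) (M1 \ {s(u1, v)}))
        (insert s(u1, v) (insert s(u3, u4) (M2 \ {s(u1, u4)}))) := by
      rw [Set.disjoint_left]
      rintro q (rfl | ⟨hq, hne⟩) hq2
      · rcases hq2 with h | h | ⟨h, _⟩
        · rcases Sym2.eq_iff.mp h with ⟨_, h2⟩ | ⟨h1', _⟩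
          · exact hvu2 h2.symm
          · exact hvu1 h1'.symm
        · rcases Sym2.eq_iff.mp h with ⟨h1', _⟩ | ⟨h1', _⟩
          · exact d13 h1'
          · exact d14 h1'
        · exact a12.2 (Or.inr h)
      · rcases hq2 with h | h | ⟨h2, _⟩
        · exact hne h
        · exact a34.2 (Or.inl (h ▸ hq))
        · exact Set.disjoint_left.mp hdisj hq h2
    have hcard := hmaxcard _ _ hP1 hP2 hdisjP
    have hunion : (insert s(u1, u2) (M1 \ {s(u1, v)})) ∪
        (insert s(u1, v) (insert s(u3, u4) (M2 \ {s(u1, u4)}))) =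
        insert s(u1, u2) (insert s(u3, u4) ((M1 ∪ M2) \ {s(u1, u4)})) := by
      ext q
      simp only [Set.mem_union, Set.mem_insert_iff, Set.mem_diff, Set.mem_singleton_iff]
      constructor
      · rintro ((rfl | ⟨h, hne⟩) | (rfl | rfl | ⟨h, hne⟩))
        · exact Or.inl rfl
        · refine Or.inr (Or.inr ⟨Or.inl h, ?_⟩)
          intro hq
          exact Set.disjoint_left.mp hdisj (hq ▸ h) hfM2
        · refine Or.inr (Or.inr ⟨Or.inl he, ?_⟩)
          intro hq
          rcases Sym2.eq_iff.mp hq with ⟨_, h2⟩ | ⟨h1', _⟩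
          · exact hvu4 h2
          · exact d14 h1'
        · exact Or.inr (Or.inl rfl)
        · exact Or.inr (Or.inr ⟨Or.inr h, hne⟩)
      · rintro (rfl | rfl | ⟨(h | h), hne⟩)
        · exact Or.inl (Or.inl rfl)
        · exact Or.inr (Or.inr (Or.inl rfl))
        · by_cases hq0 : q = s(u1, v)
          · exact Or.inr (Or.inl hq0)
          · exact Or.inl (Or.inr ⟨h, hq0⟩)
        · exact Or.inr (Or.inr (Or.inr ⟨h, hne⟩))
    rw [hunion] at hcard
    have hfU : s(u1, u4) ∈ M1 ∪ M2 := Or.inr hfM2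
    have hd1 : (((M1 ∪ M2)) \ {s(u1, u4)}).ncard + 1 = (M1 ∪ M2).ncard :=
      Set.ncard_diff_singleton_add_one hfU (Set.toFinite _)
    have hd2 : s(u3, u4) ∉ (M1 ∪ M2) \ {s(u1, u4)} := fun h => a34.2 h.1
    have hd3 : s(u1, u2) ∉ insert s(u3, u4) ((M1 ∪ M2) \ {s(u1, u4)}) := by
      rintro (h | h)
      · rcases Sym2.eq_iff.mp h with ⟨h1', _⟩ | ⟨h1', _⟩
        · exact d13 h1'
        · exact d14 h1'
      · exact a12.2 h.1
    rw [Set.ncard_insert_of_notMem hd3 (Set.toFinite _),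
      Set.ncard_insert_of_notMem hd2 (Set.toFinite _)] at hcard
    omega
  · -- strict decrease of the conflict graph: N1 = M1 - u1v + u1u2, N2 = M2
    have hE12G : G.Adj u1 u2 := a12.1
    have hE12U : s(u1, u2) ∉ M1 ∪ M2 := a12.2
    have hu1fM1' : ∀ q ∈ M1 \ {s(u1, v)}, u1 ∉ q := by
      rintro q ⟨hq, hne⟩ hmem
      obtain ⟨y, rfl, hadj⟩ := edge_rep (hM1.1 hq) hmem
      rcases hu1nbr y hadj with rfl | rfl | rfl
      · exact a12.2 (Or.inl hq)
      · exact hne rfl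
      · exact Set.disjoint_left.mp hdisj hq hfM2
    have hN1m : IsMatchingSet G (insert s(u1, u2) (M1 \ {s(u1, v)})) :=
      (hM1.subset' Set.diff_subset).insert' hE12G hu1fM1' (fun q hq => hu2f q hq.1)
    have hdisjN : Disjoint (insert s(u1, u2) (M1 \ {s(u1, v)})) M2 := by
      rw [Set.disjoint_left]
      rintro q (rfl | ⟨hq, _⟩) h2
      · exact hE12U (Or.inr h2)
      · exact Set.disjoint_left.mp hdisj hq h2
    have hUn : insert s(u1, u2) (M1 \ {s(u1, v)}) ∪ M2 =
        insert s(u1, u2) ((M1 ∪ M2) \ {s(u1, v)}) := by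
      ext q
      simp only [Set.mem_union, Set.mem_insert_iff, Set.mem_diff, Set.mem_singleton_iff]
      constructor
      · rintro ((rfl | ⟨h, hne⟩) | h)
        · exact Or.inl rfl
        · exact Or.inr ⟨Or.inl h, hne⟩
        · exact Or.inr ⟨Or.inr h, fun hq => he2 (hq ▸ h)⟩
      · rintro (rfl | ⟨(h | h), hne⟩)
        · exact Or.inl (Or.inl rfl)
        · exact Or.inl (Or.inr ⟨h, hne⟩)
        · exact Or.inr h
    have hcardN : (insert s(u1, u2) (M1 \ {s(u1, v)}) ∪ M2).ncard = (M1 ∪ M2).ncard := by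
      rw [hUn]
      have h2 : s(u1, u2) ∉ (M1 ∪ M2) \ {s(u1, v)} := fun h => hE12U h.1
      rw [Set.ncard_insert_of_notMem h2 (Set.toFinite _)]
      exact Set.ncard_diff_singleton_add_one heU (Set.toFinite _)
    have hminN := hmin _ _ hN1m hM2 hdisjN hcardN
    -- notation
    have hE12U' : s(u1, u2) ∈ insert s(u1, u2) (M1 \ {s(u1, v)}) ∪ M2 :=
      Or.inl (Set.mem_insert _ _)
    have hnotU : ∀ q : Sym2 V, q ∉ insert s(u1, u2) (M1 \ {s(u1, v)}) ∪ M2 →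
        q ≠ s(u1, v) → q ∉ M1 ∪ M2 := by
      intro q hq hne hU'
      exact hq (by rw [hUn]; exact Or.inr ⟨hU', hne⟩)
    have hv1free : ∀ q ∈ G.edgeSet, v1 ∈ q → q ∉ M1 ∪ M2 → q = s(v1, v) := by
      intro q hq hmem hfree
      obtain ⟨y, rfl, hadj⟩ := edge_rep hq hmem
      rw [cv1 y ⟨hadj, hfree⟩]
    have hv2free : ∀ q ∈ G.edgeSet, v2 ∈ q → q ∉ M1 ∪ M2 → q = s(v2, v) := by
      intro q hq hmem hfree
      obtain ⟨y, rfl, hadj⟩ := edge_rep hq hmem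
      rw [cv2 y ⟨hadj, hfree⟩]
    -- closeness transfer from s(u1,v) to s(u1,u2)
    have hclose : ∀ b : Sym2 V, b ∈ G.edgeSet → b ∉ M1 ∪ M2 → b ≠ s(u1, v) →
        (∃ x y, x ∈ s(u1, v) ∧ y ∈ b ∧ (x = y ∨ G.Adj x y)) →
        ∃ x y, x ∈ s(u1, u2) ∧ y ∈ b ∧ (x = y ∨ G.Adj x y) := by
      rintro b hbG hbU hbne ⟨x, y, hx, hy, hor⟩
      rcases Sym2.mem_iff.mp hx with rfl | rfl
      · exact ⟨x, y, Sym2.mem_mk_left _ _, hy, hor⟩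
      · rcases hor with rfl | hadj
        · exact ⟨u1, x, Sym2.mem_mk_left _ _, hy, Or.inr heG⟩
        · rcases hvnbr y hadj with rfl | rfl | rfl
          · exact ⟨y, y, Sym2.mem_mk_left _ _, hy, Or.inl rfl⟩
          · have hb' := hv1free b hbG hy hbU
            refine ⟨u1, x, Sym2.mem_mk_left _ _, ?_, Or.inr heG⟩
            rw [hb']
            exact Sym2.mem_mk_right _ _
          · have hb' := hv2free b hbG hy hbU
            refine ⟨u1, x, Sym2.mem_mk_left _ _, ?_, Or.inr heG⟩
            rw [hb']
            exact Sym2.mem_mk_right _ _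
    -- s(u1,v) is not close to s(u3,u4)
    have hnox : ¬ ∃ x y, x ∈ s(u1, v) ∧ y ∈ s(u3, u4) ∧ (x = y ∨ G.Adj x y) := by
      rintro ⟨x, y, hx, hy, hor⟩
      rcases Sym2.mem_iff.mp hx with rfl | rfl <;> rcases Sym2.mem_iff.mp hy with rfl | rfl
      · rcases hor with h | h
        · exact d13 h
        · rcases hu1nbr _ h with h' | h' | h'
          · exact d23 h'.symm
          · exact hvu3 h'.symm
          · exact hz3 h'.symm
      · rcases hor with h | h
        · exact d14 h
        · rcases hu1nbr _ h with h' | h' | h'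
          · exact d24 h'.symm
          · exact hvu4 h'.symm
          · exact hz4 h'.symm
      · rcases hor with h | h
        · exact hvu3 h
        · rcases hvnbr _ h with h' | h' | h'
          · exact d13 h'.symm
          · exact hu3v1 h'
          · exact hu3v2 h'
      · rcases hor with h | h
        · exact hvu4 h
        · rcases hvnbr _ h with h' | h' | h'
          · exact d14 h'.symm
          · exact hu4v1 h'
          · exact hu4v2 h'
    have hE12F : s(u1, u2) ∈ G.edgeSet \ (M1 ∪ M2) := ⟨G.mem_edgeSet.mpr hE12G, hE12U⟩
    have hE34F : s(u3, u4) ∈ G.edgeSet \ (M1 ∪ M2) := ⟨G.mem_edgeSet.mpr a34.1, a34.2⟩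
    have hne1234 : s(u1, u2) ≠ s(u3, u4) := by
      intro h
      rcases Sym2.eq_iff.mp h with ⟨h1', _⟩ | ⟨h1', _⟩
      · exact d13 h1'
      · exact d14 h1'
    have hx0m : s(s(u1, u2), s(u3, u4)) ∈ conflictEdges G M1 M2 :=
      ⟨s(u1, u2), s(u3, u4), rfl, hne1234, hE12F, hE34F, u2, u3,
        Sym2.mem_mk_right _ _, Sym2.mem_mk_left _ _, Or.inr a23.1⟩
    set ρ : Sym2 V → Sym2 V := fun q => if q = s(u1, v) then s(u1, u2) else q with hρdef
    have hρe : ρ s(u1, v) = s(u1, u2) := by rw [hρdef]; simp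
    have hρne : ∀ q : Sym2 V, q ≠ s(u1, v) → ρ q = q := by
      intro q h
      rw [hρdef]
      simp [h]
    -- the image of the new conflict set avoids s(s(u1,u2), s(u3,u4))
    have himg : ∀ p ∈ conflictEdges G (insert s(u1, u2) (M1 \ {s(u1, v)})) M2,
        Sym2.map ρ p ∈ conflictEdges G M1 M2 \ {s(s(u1, u2), s(u3, u4))} := by
      rintro p ⟨ea, eb, rfl, hab, ⟨haG, haU'⟩, ⟨hbG, hbU'⟩, hcl⟩
      rw [Sym2.map_pair_eq]
      have core : ∀ b : Sym2 V, b ∈ G.edgeSet →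
          b ∉ insert s(u1, u2) (M1 \ {s(u1, v)}) ∪ M2 → b ≠ s(u1, v) →
          (∃ x y, x ∈ s(u1, v) ∧ y ∈ b ∧ (x = y ∨ G.Adj x y)) →
          s(s(u1, u2), b) ∈ conflictEdges G M1 M2 \ {s(s(u1, u2), s(u3, u4))} := by
        intro b hbG' hbU'' hbne hclb
        have hbU : b ∉ M1 ∪ M2 := hnotU b hbU'' hbne
        constructor
        · exact ⟨s(u1, u2), b, rfl, fun h => hbU'' (h ▸ hE12U'), hE12F, ⟨hbG', hbU⟩,
            hclose b hbG' hbU hbne hclb⟩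
        · intro hx0'
          rw [Set.mem_singleton_iff] at hx0'
          rcases Sym2.eq_iff.mp hx0' with ⟨_, h2⟩ | ⟨h1', _⟩
          · exact hnox (h2 ▸ hclb)
          · exact hne1234 h1'
      by_cases hae : ea = s(u1, v) <;> by_cases hbe : eb = s(u1, v)
      · exact absurd (hae.trans hbe.symm) hab
      · rw [hae, hρe, hρne eb hbe]
        exact core eb hbG hbU' hbe (hae ▸ hcl)
      · rw [hbe, hρe, hρne ea hae]
        have hcore := core ea haG haU' hae (by
          obtain ⟨x, y, hx, hy, hor⟩ := hcl
          refine ⟨y, x, hbe ▸ hy, hx, ?_⟩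
          rcases hor with h | h
          · exact Or.inl h.symm
          · exact Or.inr h.symm)
        rwa [Sym2.eq_swap (a := s(u1, u2)) (b := ea)] at hcore
      · rw [hρne ea hae, hρne eb hbe]
        have haU : ea ∉ M1 ∪ M2 := hnotU ea haU' hae
        have hbU : eb ∉ M1 ∪ M2 := hnotU eb hbU' hbe
        refine ⟨⟨ea, eb, rfl, hab, ⟨haG, haU⟩, ⟨hbG, hbU⟩, hcl⟩, ?_⟩
        intro hmem
        rw [Set.mem_singleton_iff] at hmem
        rcases Sym2.eq_iff.mp hmem with ⟨h1', _⟩ | ⟨_, h2'⟩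
        · exact haU' (by rw [h1']; exact hE12U')
        · exact hbU' (by rw [h2']; exact hE12U')
    -- injectivity of the map on the new conflict set
    have hinj : Set.InjOn (Sym2.map ρ) (conflictEdges G (insert s(u1, u2) (M1 \ {s(u1, v)})) M2) := by
      have hρinj : ∀ q : Sym2 V, q ∉ insert s(u1, u2) (M1 \ {s(u1, v)}) ∪ M2 →
          ∀ q' : Sym2 V, q' ∉ insert s(u1, u2) (M1 \ {s(u1, v)}) ∪ M2 → ρ q = ρ q' → q = q' := by
        intro q hq q' hq' heq
        by_cases h1 : q = s(u1, v) <;> by_cases h2 : q' = s(u1, v)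
        · rw [h1, h2]
        · rw [h1, hρe, hρne q' h2] at heq
          exact absurd (heq ▸ hE12U') hq'
        · rw [h2, hρe, hρne q h1] at heq
          exact absurd (heq ▸ hE12U') hq
        · rwa [hρne q h1, hρne q' h2] at heq
      rintro p hp p' hp' heq
      obtain ⟨ea, eb, rfl, hab, ⟨haG, haU'⟩, ⟨hbG, hbU'⟩, hcl⟩ := hp
      obtain ⟨ea', eb', rfl, hab', ⟨haG', haU''⟩, ⟨hbG', hbU''⟩, hcl'⟩ := hp'
      rw [Sym2.map_pair_eq, Sym2.map_pair_eq] at heq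
      rcases Sym2.eq_iff.mp heq with ⟨h1, h2⟩ | ⟨h1, h2⟩
      · rw [hρinj _ haU' _ haU'' h1, hρinj _ hbU' _ hbU'' h2]
      · rw [hρinj _ haU' _ hbU'' h1, hρinj _ hbU' _ haU'' h2, Sym2.eq_swap]
    have hcard1 : (conflictEdges G (insert s(u1, u2) (M1 \ {s(u1, v)})) M2).ncard ≤
        (conflictEdges G M1 M2 \ {s(s(u1, u2), s(u3, u4))}).ncard := by
      rw [← Set.ncard_image_of_injOn hinj]
      refine Set.ncard_le_ncard ?_ (Set.toFinite _)
      rintro q ⟨p, hp, rfl⟩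
      exact himg p hp
    have hcard2 : (conflictEdges G M1 M2 \ {s(s(u1, u2), s(u3, u4))}).ncard <
        (conflictEdges G M1 M2).ncard :=
      Set.ncard_diff_singleton_lt_of_mem hx0m (Set.toFinite _)
    omega

end CaseA

section MainAux

lemma main_aux {V : Type*} [Fintype V] (G : SimpleGraph V) [DecidableRel G.Adj]
    (hcubic : ∀ v : V, G.degree v = 3) (M1 M2 : Set (Sym2 V))
    (hmax : MaxDisjointPair G M1 M2)
    (hmin : ∀ N1 N2 : Set (Sym2 V), IsMatchingSet G N1 → IsMatchingSet G N2 →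
      Disjoint N1 N2 → (N1 ∪ N2).ncard = (M1 ∪ M2).ncard →
      (conflictEdges G M1 M2).ncard ≤ (conflictEdges G N1 N2).ncard)
    (u1 u2 u3 u4 : V) (hP4 : IsP4Component G M1 M2 u1 u2 u3 u4)
    (v1 v v2 : V) (hP3 : IsP3Component G M1 M2 v1 v v2)
    (he : s(u1, v) ∈ M1) : False := by
  classical
  have hP4' := hP4
  have hP3' := hP3
  obtain ⟨hM1, hM2, hdisj, hmaxcard⟩ := hmax
  obtain ⟨d12, d13, d14, d23, d24, d34, a12, a23, a34, c1, c2, c3, c4⟩ := hP4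
  obtain ⟨dv12, dv1, dv2, av1, av2, cv, cv1, cv2⟩ := hP3
  have hsym : ∀ {x y : V}, hatAdj G M1 M2 x y → hatAdj G M1 M2 y x := by
    intro x y hxy
    obtain ⟨hxy1, hxy2⟩ := hxy
    exact ⟨hxy1.symm, by rw [Sym2.eq_swap]; exact hxy2⟩
  have hUsub : M1 ∪ M2 ⊆ G.edgeSet := Set.union_subset hM1.1 hM2.1
  have heU : s(u1, v) ∈ M1 ∪ M2 := Or.inl he
  have heG : G.Adj u1 v := hM1.adj he
  have he2 : s(u1, v) ∉ M2 := fun h => Set.disjoint_left.mp hdisj he h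
  have hvu2 : v ≠ u2 := by
    intro h
    rw [← h] at a12
    exact a12.2 heU
  have hvu3 : v ≠ u3 := by
    intro h
    have h23 : hatAdj G M1 M2 v u2 := by rw [h]; exact hsym a23
    rcases cv u2 h23 with h' | h'
    · have h1 := cv1 u1 (by rw [← h']; exact hsym a12)
      rw [h] at h1
      exact d13 h1
    · have h1 := cv2 u1 (by rw [← h']; exact hsym a12)
      rw [h] at h1
      exact d13 h1
  have hu1v1 : u1 ≠ v1 := by
    intro h
    rw [h] at heU
    rw [Sym2.eq_swap] at heU
    exact av1.2 heU
  have hu1v2 : u1 ≠ v2 := by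
    intro h
    rw [h] at heU
    rw [Sym2.eq_swap] at heU
    exact av2.2 heU
  have hvnbr : ∀ y, G.Adj v y → y = u1 ∨ y = v1 ∨ y = v2 :=
    three_nbrs (hcubic v) hu1v1 hu1v2 dv12 heG.symm av1.1 av2.1
  have hvfM2 : ∀ q ∈ M2, v ∉ q := by
    intro q hq hmem
    obtain ⟨y, rfl, hadj⟩ := edge_rep (hM2.1 hq) hmem
    rcases hvnbr y hadj with rfl | rfl | rfl
    · rw [Sym2.eq_swap] at hq
      exact he2 hq
    · exact av1.2 (Or.inr hq)
    · exact av2.2 (Or.inr hq)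
  -- u2's matched edge
  obtain ⟨w, hw_adj, hw_ne1, hw_ne3⟩ := third_nbr (hcubic u2) a12.1.symm a23.1
  have hu2nbr : ∀ y, G.Adj u2 y → y = u1 ∨ y = u3 ∨ y = w :=
    three_nbrs (hcubic u2) d13 hw_ne1.symm hw_ne3.symm a12.1.symm a23.1 hw_adj
  have hu2uniq : ∀ q ∈ M1 ∪ M2, u2 ∈ q → q = s(u2, w) := by
    intro q hq hmem
    obtain ⟨y, rfl, hadj⟩ := edge_rep (hUsub hq) hmem
    rcases hu2nbr y hadj with rfl | rfl | rfl
    · rw [Sym2.eq_swap] at hq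
      exact absurd hq a12.2
    · exact absurd hq a23.2
    · rfl
  -- u3's matched edge
  obtain ⟨w3, hw3_adj, hw3_ne2, hw3_ne4⟩ := third_nbr (hcubic u3) a23.1.symm a34.1
  have hu3nbr : ∀ y, G.Adj u3 y → y = u2 ∨ y = u4 ∨ y = w3 :=
    three_nbrs (hcubic u3) d24 hw3_ne2.symm hw3_ne4.symm a23.1.symm a34.1 hw3_adj
  have hh : s(u3, w3) ∈ M1 ∪ M2 := by
    by_contra hfree
    rcases c3 w3 ⟨hw3_adj, hfree⟩ with h | h
    · exact hw3_ne2 h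
    · exact hw3_ne4 h
  have hu3uniq : ∀ q ∈ M1 ∪ M2, u3 ∈ q → q = s(u3, w3) := by
    intro q hq hmem
    obtain ⟨y, rfl, hadj⟩ := edge_rep (hUsub hq) hmem
    rcases hu3nbr y hadj with rfl | rfl | rfl
    · rw [Sym2.eq_swap] at hq
      exact absurd hq a23.2
    · exact absurd hq a34.2
    · rfl
  by_cases hu2f : ∀ q ∈ M1, u2 ∉ q
  · exact caseA G hcubic M1 M2 ⟨hM1, hM2, hdisj, hmaxcard⟩ hmin u1 u2 u3 u4 hP4'
      v1 v v2 hP3' he hu2f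
  · push_neg at hu2f
    obtain ⟨g0, hg0M1, hg0mem⟩ := hu2f
    have hgM1 : s(u2, w) ∈ M1 := (hu2uniq g0 (Or.inl hg0M1) hg0mem) ▸ hg0M1
    have hu2fM2 : ∀ q ∈ M2, u2 ∉ q := by
      intro q hq hmem
      exact Set.disjoint_left.mp hdisj hgM1 ((hu2uniq q (Or.inr hq) hmem) ▸ hq)
    by_cases hhM1 : s(u3, w3) ∈ M1
    · -- augment with s(u2,u3) into M2
      have hu3fM2 : ∀ q ∈ M2, u3 ∉ q := by
        intro q hq hmem
        exact Set.disjoint_left.mp hdisj hhM1 ((hu3uniq q (Or.inr hq) hmem) ▸ hq)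
      have hP2 : IsMatchingSet G (insert s(u2, u3) M2) := hM2.insert' a23.1 hu2fM2 hu3fM2
      have hdisjP : Disjoint M1 (insert s(u2, u3) M2) := by
        rw [Set.disjoint_left]
        intro q hq hq2
        rcases hq2 with rfl | hq2
        · exact a23.2 (Or.inl hq)
        · exact Set.disjoint_left.mp hdisj hq hq2
      have hcard := hmaxcard _ _ hM1 hP2 hdisjP
      rw [Set.union_insert] at hcard
      rw [Set.ncard_insert_of_notMem a23.2 (Set.toFinite _)] at hcard
      omega
    · have hhM2 : s(u3, w3) ∈ M2 := hh.resolve_left hhM1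
      have hSclose : ∀ (r x y : V), (unionG (M1 ∪ M2)).Reachable r x → s(x, y) ∈ M1 ∪ M2 →
          (unionG (M1 ∪ M2)).Reachable r y := by
        intro r x y hx hxy
        by_cases hxy' : x = y
        · rwa [hxy'] at hx
        · exact hx.trans (SimpleGraph.Adj.reachable (unionG_adj.mpr ⟨hxy', hxy⟩))
      by_cases hr1 : (unionG (M1 ∪ M2)).Reachable u2 u1
      · by_cases hr3 : (unionG (M1 ∪ M2)).Reachable u2 u3
        · -- three endpoints of alternating paths in the same component
          refine no_three_ends hM1 hM2 hdisj (Ne.symm hvu2) d23 hvu3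
            (fun y hy => hu2fM2 _ hy (Sym2.mem_mk_left _ _))
            (fun y hy => hvfM2 _ hy (Sym2.mem_mk_left _ _))
            (fun y hy => hhM1 ((hu3uniq _ (Or.inl hy) (Sym2.mem_mk_left _ _)) ▸ hy))
            ?_ hr3
          exact hr1.trans (SimpleGraph.Adj.reachable (unionG_adj.mpr ⟨heG.ne, heU⟩))
        · -- recolor the component of u3, then augment with s(u2,u3)
          obtain ⟨hN1m, hN2m, hNdisj, hNunion⟩ := flip_pair hM1 hM2 hdisj
            {x | (unionG (M1 ∪ M2)).Reachable u3 x}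
            (fun x y hx hxy => hSclose u3 x y hx hxy)
          set S : Set V := {x | (unionG (M1 ∪ M2)).Reachable u3 x} with hSdef
          have hu2S : u2 ∉ S := fun hmem => hr3 (Reachable.symm hmem)
          have hwS : w ∉ S := fun hmem => hr3 (Reachable.symm
            (hSclose u3 w u2 hmem (by rw [Sym2.eq_swap]; exact Or.inl hgM1)))
          have hgK : s(u2, w) ∉ flipK S := by
            rintro ⟨x, hx, hxS⟩
            rcases Sym2.mem_iff.mp hx with h | h
            · rw [h] at hxS; exact hu2S hxS
            · rw [h] at hxS; exact hwS hxS
          have hgN1 : s(u2, w) ∈ M1 \ flipK S ∪ M2 ∩ flipK S := Or.inl ⟨hgM1, hgK⟩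
          have hhN1 : s(u3, w3) ∈ M1 \ flipK S ∪ M2 ∩ flipK S :=
            Or.inr ⟨hhM2, ⟨u3, Sym2.mem_mk_left _ _, Reachable.refl u3⟩⟩
          have hN1sub : M1 \ flipK S ∪ M2 ∩ flipK S ⊆ M1 ∪ M2 := by
            rw [← hNunion]; exact Set.subset_union_left
          have hN2sub : M2 \ flipK S ∪ M1 ∩ flipK S ⊆ M1 ∪ M2 := by
            rw [← hNunion]; exact Set.subset_union_right
          have hu2fN2 : ∀ q ∈ M2 \ flipK S ∪ M1 ∩ flipK S, u2 ∉ q := by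
            intro q hq hmem
            exact Set.disjoint_left.mp hNdisj hgN1 ((hu2uniq q (hN2sub hq) hmem) ▸ hq)
          have hu3fN2 : ∀ q ∈ M2 \ flipK S ∪ M1 ∩ flipK S, u3 ∉ q := by
            intro q hq hmem
            exact Set.disjoint_left.mp hNdisj hhN1 ((hu3uniq q (hN2sub hq) hmem) ▸ hq)
          have hP2 : IsMatchingSet G (insert s(u2, u3) (M2 \ flipK S ∪ M1 ∩ flipK S)) :=
            hN2m.insert' a23.1 hu2fN2 hu3fN2
          have hdisjP : Disjoint (M1 \ flipK S ∪ M2 ∩ flipK S)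
              (insert s(u2, u3) (M2 \ flipK S ∪ M1 ∩ flipK S)) := by
            rw [Set.disjoint_left]
            intro q hq hq2
            rcases hq2 with rfl | hq2
            · exact a23.2 (hN1sub hq)
            · exact Set.disjoint_left.mp hNdisj hq hq2
          have hcard := hmaxcard _ _ hN1m hP2 hdisjP
          rw [Set.union_insert, hNunion] at hcard
          rw [Set.ncard_insert_of_notMem a23.2 (Set.toFinite _)] at hcard
          omega
      · -- recolor the component of u2, then apply case A
        obtain ⟨hN1m, hN2m, hNdisj, hNunion⟩ := flip_pair hM1 hM2 hdisj
          {x | (unionG (M1 ∪ M2)).Reachable u2 x}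
          (fun x y hx hxy => hSclose u2 x y hx hxy)
        set S : Set V := {x | (unionG (M1 ∪ M2)).Reachable u2 x} with hSdef
        have hu1S : u1 ∉ S := fun h => hr1 h
        have hvS : v ∉ S := fun h => hr1
          (hSclose u2 v u1 h (by rw [Sym2.eq_swap]; exact heU))
        have heK : s(u1, v) ∉ flipK S := by
          rintro ⟨x, hx, hxS⟩
          rcases Sym2.mem_iff.mp hx with h | h
          · rw [h] at hxS; exact hu1S hxS
          · rw [h] at hxS; exact hvS hxS
        have heN1 : s(u1, v) ∈ M1 \ flipK S ∪ M2 ∩ flipK S := Or.inl ⟨he, heK⟩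
        have hN1sub : M1 \ flipK S ∪ M2 ∩ flipK S ⊆ M1 ∪ M2 := by
          rw [← hNunion]; exact Set.subset_union_left
        have hgK : s(u2, w) ∈ flipK S := ⟨u2, Sym2.mem_mk_left _ _, Reachable.refl u2⟩
        have hu2fN1 : ∀ q ∈ M1 \ flipK S ∪ M2 ∩ flipK S, u2 ∉ q := by
          intro q hq hmem
          have hq' := hu2uniq q (hN1sub hq) hmem
          rcases hq with ⟨hqM1, hqK⟩ | ⟨hqM2, _⟩
          · exact hqK (hq' ▸ hgK)
          · exact Set.disjoint_left.mp hdisj hgM1 (hq' ▸ hqM2)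
        have hmax' : MaxDisjointPair G (M1 \ flipK S ∪ M2 ∩ flipK S)
            (M2 \ flipK S ∪ M1 ∩ flipK S) :=
          ⟨hN1m, hN2m, hNdisj, fun P1 P2 hP1 hP2 hdP => by
            rw [hNunion]; exact hmaxcard P1 P2 hP1 hP2 hdP⟩
        have hmin' : ∀ P1 P2 : Set (Sym2 V), IsMatchingSet G P1 → IsMatchingSet G P2 →
            Disjoint P1 P2 →
            (P1 ∪ P2).ncard = ((M1 \ flipK S ∪ M2 ∩ flipK S) ∪ (M2 \ flipK S ∪ M1 ∩ flipK S)).ncard →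
            (conflictEdges G (M1 \ flipK S ∪ M2 ∩ flipK S) (M2 \ flipK S ∪ M1 ∩ flipK S)).ncard ≤
              (conflictEdges G P1 P2).ncard := by
          intro P1 P2 hP1 hP2 hdP hsz
          rw [conflictEdges_congr G hNunion]
          exact hmin P1 P2 hP1 hP2 hdP (by rwa [hNunion] at hsz)
        exact caseA G hcubic _ _ hmax' hmin' u1 u2 u3 u4 (IsP4_congr hNunion hP4')
          v1 v v2 (IsP3_congr hNunion hP3') heN1 hu2fN1

end MainAux

theorem stmt17 {V : Type*} [Fintype V] (G : SimpleGraph V) [DecidableRel G.Adj]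
    (hcubic : ∀ v : V, G.degree v = 3) (M1 M2 : Set (Sym2 V))
    (hmax : MaxDisjointPair G M1 M2)
    -- subject to maximality, `H` has the minimum number of edges
    (hmin : ∀ N1 N2 : Set (Sym2 V), IsMatchingSet G N1 → IsMatchingSet G N2 →
      Disjoint N1 N2 → (N1 ∪ N2).ncard = (M1 ∪ M2).ncard →
      (conflictEdges G M1 M2).ncard ≤ (conflictEdges G N1 N2).ncard)
    (u1 u2 u3 u4 : V) (hP4 : IsP4Component G M1 M2 u1 u2 u3 u4)
    (v1 v v2 : V) (hP3 : IsP3Component G M1 M2 v1 v v2) :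
    s(u1, v) ∉ M1 ∪ M2 ∧ s(u4, v) ∉ M1 ∪ M2 := by
  have hcomm : M2 ∪ M1 = M1 ∪ M2 := Set.union_comm M2 M1
  have hmax2 : MaxDisjointPair G M2 M1 :=
    ⟨hmax.2.1, hmax.1, hmax.2.2.1.symm, fun P1 P2 hP1 hP2 hdP => by
      rw [hcomm]; exact hmax.2.2.2 P1 P2 hP1 hP2 hdP⟩
  have hmin2 : ∀ N1 N2 : Set (Sym2 V), IsMatchingSet G N1 → IsMatchingSet G N2 →
      Disjoint N1 N2 → (N1 ∪ N2).ncard = (M2 ∪ M1).ncard →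
      (conflictEdges G M2 M1).ncard ≤ (conflictEdges G N1 N2).ncard := by
    intro P1 P2 hP1 hP2 hdP hsz
    rw [conflictEdges_congr G hcomm]
    exact hmin P1 P2 hP1 hP2 hdP (by rwa [hcomm] at hsz)
  have hP42 : IsP4Component G M2 M1 u1 u2 u3 u4 := IsP4_congr hcomm hP4
  have hP32 : IsP3Component G M2 M1 v1 v v2 := IsP3_congr hcomm hP3
  constructor
  · rintro (h | h)
    · exact main_aux G hcubic M1 M2 hmax hmin u1 u2 u3 u4 hP4 v1 v v2 hP3 h
    · exact main_aux G hcubic M2 M1 hmax2 hmin2 u1 u2 u3 u4 hP42 v1 v v2 hP32 h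
  · rintro (h | h)
    · exact main_aux G hcubic M1 M2 hmax hmin u4 u3 u2 u1 (P4_rev hP4) v1 v v2 hP3 h
    · exact main_aux G hcubic M2 M1 hmax2 hmin2 u4 u3 u2 u1 (P4_rev hP42) v1 v v2 hP32 h
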